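/- If a simple graph G with at least one edge admits an interval t-coloring, then t ≤ 2|V(G)| − 3. -/
import Mathlib


/-- An interval `t`-coloring of `G`: a proper edge-coloring with colors `1,…,t`
such that all colors are used and the set of colors incident to each vertex is
an interval of consecutive integers. -/
def IsIntervalColoring {V : Type*} (G : SimpleGraph V) (t : ℕ) (α : Sym2 V → ℕ) : Prop :=
  (∀ e ∈ G.edgeSet, 1 ≤ α e ∧ α e ≤ t) ∧
  (∀ e ∈ G.edgeSet, ∀ e' ∈ G.edgeSet, e ≠ e' → (∃ v : V, v ∈ e ∧ v ∈ e') → α e ≠ α e') ∧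
  (∀ c : ℕ, 1 ≤ c → c ≤ t → ∃ e ∈ G.edgeSet, α e = c) ∧
  (∀ v : V, ∀ c₁ c c₂ : ℕ,
    (∃ e ∈ G.edgeSet, v ∈ e ∧ α e = c₁) → (∃ e ∈ G.edgeSet, v ∈ e ∧ α e = c₂) →
    c₁ ≤ c → c ≤ c₂ → ∃ e ∈ G.edgeSet, v ∈ e ∧ α e = c)

namespace IntervalColoringAux

/-- `Spec G α v c` : vertex `v` is incident with an edge of color `c`. -/
def Spec {V : Type*} (G : SimpleGraph V) (α : Sym2 V → ℕ) (v : V) (c : ℕ) : Prop :=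
  ∃ e ∈ G.edgeSet, v ∈ e ∧ α e = c

/-- The property of one greedy "ladder" step from boundary color `c` to a new
vertex `q.1` with new boundary color `q.2`. -/
def StProp {V : Type*} (G : SimpleGraph V) (t : ℕ) (α : Sym2 V → ℕ)
    (c : ℕ) (q : V × ℕ) : Prop :=
  c < q.2 ∧ q.2 ≤ t ∧
    (∀ m, c + 1 ≤ m → m ≤ q.2 → Spec G α q.1 m) ∧
    (∀ x m, Spec G α x c → Spec G α x (c + 1) → Spec G α x m → m ≤ q.2) ∧
    ((∀ x, ¬(Spec G α x c ∧ Spec G α x (c + 1))) ∨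
      (∀ m, c ≤ m → m ≤ q.2 → Spec G α q.1 m))

open scoped Classical in
/-- The greedy ladder sequence. -/
noncomputable def chain {V : Type*} (G : SimpleGraph V) (t : ℕ) (α : Sym2 V → ℕ)
    (v0 : V) : ℕ → V × ℕ
  | 0 => (v0, 0)
  | l + 1 =>
    if h : ∃ q, StProp G t α (chain G t α v0 l).2 q then h.choose
    else chain G t α v0 l

open scoped Classical

variable {V : Type*} {G : SimpleGraph V} {t : ℕ} {α : Sym2 V → ℕ}

lemma spec_le (hα : IsIntervalColoring G t α) {x : V} {m : ℕ}
    (h : Spec G α x m) : 1 ≤ m ∧ m ≤ t := by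
  obtain ⟨e, he, -, rfl⟩ := h
  exact hα.1 e he

lemma spec_between (hα : IsIntervalColoring G t α) {x : V} {c₁ c₂ m : ℕ}
    (h₁ : Spec G α x c₁) (h₂ : Spec G α x c₂) (hm₁ : c₁ ≤ m) (hm₂ : m ≤ c₂) :
    Spec G α x m :=
  hα.2.2.2 x c₁ m c₂ h₁ h₂ hm₁ hm₂

lemma spec_exists (hα : IsIntervalColoring G t α) {m : ℕ} (h1 : 1 ≤ m) (h2 : m ≤ t) :
    ∃ x, Spec G α x m := by
  obtain ⟨e, he, hc⟩ := hα.2.2.1 m h1 h2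
  revert he hc
  refine Sym2.ind (fun x y => ?_) e
  intro he hc
  exact ⟨x, s(x, y), he, Sym2.mem_mk_left x y, hc⟩

lemma step_ex (hα : IsIntervalColoring G t α) {c : ℕ} (hc : c < t) :
    ∃ q, StProp G t α c q := by
  classical
  by_cases hl : ∃ x, Spec G α x c ∧ Spec G α x (c + 1)
  · set M := (Finset.range (t + 1)).filter
      (fun m => ∃ x, Spec G α x c ∧ Spec G α x (c + 1) ∧ Spec G α x m) with hM
    obtain ⟨x, hx1, hx2⟩ := hl
    have hmem : c + 1 ∈ M :=
      Finset.mem_filter.2 ⟨Finset.mem_range.2 (by omega), x, hx1, hx2, hx2⟩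
    have hne : M.Nonempty := ⟨_, hmem⟩
    obtain ⟨hmaxlt, x', hx'1, hx'2, hx'3⟩ := Finset.mem_filter.1 (M.max'_mem hne)
    rw [Finset.mem_range] at hmaxlt
    refine ⟨(x', M.max' hne), ?_, by omega, ?_, ?_, Or.inr ?_⟩
    · exact lt_of_lt_of_le (by omega) (M.le_max' _ hmem)
    · intro m h1 h2
      exact spec_between hα hx'1 hx'3 (by omega) h2
    · intro y m hy1 hy2 hym
      refine M.le_max' m (Finset.mem_filter.2 ⟨Finset.mem_range.2 ?_, y, hy1, hy2, hym⟩)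
      have := (spec_le hα hym).2; omega
    · intro m h1 h2
      exact spec_between hα hx'1 hx'3 h1 h2
  · set M := (Finset.range (t + 1)).filter
      (fun m => ∃ x, Spec G α x (c + 1) ∧ Spec G α x m) with hM
    obtain ⟨x, hx⟩ := spec_exists hα (m := c + 1) (by omega) (by omega)
    have hmem : c + 1 ∈ M :=
      Finset.mem_filter.2 ⟨Finset.mem_range.2 (by omega), x, hx, hx⟩
    have hne : M.Nonempty := ⟨_, hmem⟩
    obtain ⟨hmaxlt, x', hx'1, hx'2⟩ := Finset.mem_filter.1 (M.max'_mem hne)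
    rw [Finset.mem_range] at hmaxlt
    refine ⟨(x', M.max' hne), ?_, by omega, ?_, ?_, Or.inl ?_⟩
    · exact lt_of_lt_of_le (by omega) (M.le_max' _ hmem)
    · intro m h1 h2
      exact spec_between hα hx'1 hx'2 h1 h2
    · intro y m hy1 hy2 hym
      exact absurd ⟨y, hy1, hy2⟩ hl
    · intro y hy
      exact hl ⟨y, hy⟩

lemma chain_succ (v0 : V) (l : ℕ) :
    chain G t α v0 (l + 1) =
      if h : ∃ q, StProp G t α (chain G t α v0 l).2 q then h.choose
      else chain G t α v0 l :=
  rfl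

lemma chain_succ_lt (hα : IsIntervalColoring G t α) (v0 : V) (l : ℕ)
    (h : (chain G t α v0 l).2 < t) :
    StProp G t α (chain G t α v0 l).2 (chain G t α v0 (l + 1)) := by
  have hex := step_ex hα h
  rw [chain_succ, dif_pos hex]
  exact hex.choose_spec

lemma chain_snd_le (v0 : V) : ∀ l, (chain G t α v0 l).2 ≤ t
  | 0 => Nat.zero_le t
  | l + 1 => by
    rw [chain_succ]
    split_ifs with h
    · exact h.choose_spec.2.1
    · exact chain_snd_le v0 l

lemma chain_mono_succ (v0 : V) (l : ℕ) :
    (chain G t α v0 l).2 ≤ (chain G t α v0 (l + 1)).2 := by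
  rw [chain_succ]
  split_ifs with h
  · exact le_of_lt h.choose_spec.1
  · exact le_rfl

lemma chain_mono (v0 : V) : Monotone fun l => (chain G t α v0 l).2 :=
  monotone_nat_of_le_succ (chain_mono_succ v0)

lemma chain_stall (v0 : V) (l : ℕ) (h : (chain G t α v0 l).2 = t) :
    (chain G t α v0 (l + 1)).2 = t := by
  rw [chain_succ]
  split_ifs with hq
  · exfalso
    have h1 := hq.choose_spec.1
    have h2 := hq.choose_spec.2.1
    omega
  · exact h

lemma chain_reach (hα : IsIntervalColoring G t α) (v0 : V) :
    (chain G t α v0 t).2 = t := by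
  have key : ∀ l, l ≤ (chain G t α v0 l).2 ∨ (chain G t α v0 l).2 = t := by
    intro l
    induction l with
    | zero => exact Or.inl (Nat.zero_le _)
    | succ l ih =>
      rcases ih with hle | heq
      · by_cases hlt : (chain G t α v0 l).2 < t
        · have h2 := (chain_succ_lt hα v0 l hlt).1
          left; omega
        · have hteq : (chain G t α v0 l).2 = t :=
            le_antisymm (chain_snd_le v0 l) (not_lt.1 hlt)
          exact Or.inr (chain_stall v0 l hteq)
      · exact Or.inr (chain_stall v0 l heq)
  rcases key t with h | h
  · exact le_antisymm (chain_snd_le v0 t) h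
  · exact h

/-- Given a vertex `w` incident to all colors in `[a,b]`, produce the finset
consisting of `w` together with one neighbour for each color in `[a,b]`. -/
lemma pset_aux (hα : IsIntervalColoring G t α) (w : V) (a b : ℕ) (hab : a ≤ b)
    (h : ∀ m, a ≤ m → m ≤ b → Spec G α w m) :
    ∃ P : Finset V, P.card = b + 1 - a + 1 ∧
      ∀ x ∈ P, ∃ m, Spec G α x m ∧ a ≤ m ∧ m ≤ b := by
  classical
  have hpart : ∀ m, ∃ y, m ∈ Finset.Icc a b → (G.Adj w y ∧ α s(w, y) = m) := by
    intro m
    by_cases hm : m ∈ Finset.Icc a b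
    · rw [Finset.mem_Icc] at hm
      obtain ⟨e, he, hwe, hae⟩ := h m hm.1 hm.2
      obtain ⟨y, rfl⟩ := Sym2.mem_iff_exists.1 hwe
      exact ⟨y, fun _ => ⟨G.mem_edgeSet.1 he, hae⟩⟩
    · exact ⟨w, fun hc => absurd hc hm⟩
  choose f hf using hpart
  have hinj : Set.InjOn f (Finset.Icc a b) := by
    intro m₁ h₁ m₂ h₂ heq
    have e1 := (hf m₁ h₁).2
    have e2 := (hf m₂ h₂).2
    rw [heq] at e1
    exact (e2.symm.trans e1).symm
  have hnm : w ∉ (Finset.Icc a b).image f := by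
    rw [Finset.mem_image]
    rintro ⟨m, hm, hfm⟩
    have := (hf m hm).1
    rw [hfm] at this
    exact G.irrefl this
  refine ⟨insert w ((Finset.Icc a b).image f), ?_, ?_⟩
  · rw [Finset.card_insert_of_notMem hnm, Finset.card_image_of_injOn hinj,
      Nat.card_Icc]
  · intro x hx
    rcases Finset.mem_insert.1 hx with rfl | hx
    · exact ⟨b, h b hab le_rfl, hab, le_rfl⟩
    · obtain ⟨m, hm, rfl⟩ := Finset.mem_image.1 hx
      have hfm := hf m hm
      rw [Finset.mem_Icc] at hm
      exact ⟨m, ⟨s(w, f m), G.mem_edgeSet.2 hfm.1,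
        Sym2.mem_mk_right w (f m), hfm.2⟩, hm.1, hm.2⟩

end IntervalColoringAux

/-- If a simple graph `G` with at least one edge admits an interval `t`-coloring,
then `t ≤ 2|V(G)| - 3`. -/
theorem interval_coloring_bound_two_n_sub_three {V : Type*} [Fintype V]
    (G : SimpleGraph V) (t : ℕ) (α : Sym2 V → ℕ)
    (hE : G.edgeSet.Nonempty)
    (hα : IsIntervalColoring G t α) :
    t ≤ 2 * Fintype.card V - 3 := by
  classical
  open IntervalColoringAux in
  have htpos : 1 ≤ t := by
    obtain ⟨e₀, he₀⟩ := hE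
    have h := hα.1 e₀ he₀
    omega
  obtain ⟨x0, y0, hadj⟩ : ∃ x y : V, G.Adj x y := by
    obtain ⟨e₀, he₀⟩ := hE
    revert he₀
    exact Sym2.ind (fun x y h => ⟨x, y, G.mem_edgeSet.1 h⟩) e₀
  have hn2 : 2 ≤ Fintype.card V := by
    have : Nontrivial V := ⟨⟨x0, y0, hadj.ne⟩⟩
    exact Fintype.one_lt_card
  set n := Fintype.card V with hn
  set c : ℕ → ℕ := fun l => (IntervalColoringAux.chain G t α x0 l).2 with hcdef
  set u : ℕ → V := fun l => (IntervalColoringAux.chain G t α x0 l).1 with hudef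
  have hreach : ∃ l, c l = t := ⟨t, IntervalColoringAux.chain_reach hα x0⟩
  set r := Nat.find hreach with hrdef
  have hcr : c r = t := Nat.find_spec hreach
  have hrmin : ∀ l, l < r → c l ≠ t := fun l hl => Nat.find_min hreach hl
  have hc0 : c 0 = 0 := rfl
  have hmono : ∀ a b : ℕ, a ≤ b → c a ≤ c b :=
    fun a b hab => IntervalColoringAux.chain_mono x0 hab
  have hcle : ∀ l, c l ≤ t := fun l => IntervalColoringAux.chain_snd_le x0 l
  have hrpos : 1 ≤ r := by
    by_contra hcon
    have : r = 0 := by omega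
    rw [this] at hcr
    omega
  have hstep : ∀ l, 1 ≤ l → l ≤ r →
      IntervalColoringAux.StProp G t α (c (l - 1)) (IntervalColoringAux.chain G t α x0 l) := by
    intro l h1 h2
    have hlt : c (l - 1) < t := lt_of_le_of_ne (hcle _) (hrmin _ (by omega))
    have hgoal := IntervalColoringAux.chain_succ_lt hα x0 (l - 1) hlt
    have heq : l - 1 + 1 = l := by omega
    rwa [heq] at hgoal
  have hlt : ∀ l, 1 ≤ l → l ≤ r → c (l - 1) < c l := fun l h1 h2 => (hstep l h1 h2).1
  have hblock : ∀ l, 1 ≤ l → l ≤ r → ∀ m, c (l - 1) + 1 ≤ m → m ≤ c l →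
      IntervalColoringAux.Spec G α (u l) m := fun l h1 h2 => (hstep l h1 h2).2.2.1
  have hmaxp : ∀ l, 1 ≤ l → l ≤ r → ∀ x m, IntervalColoringAux.Spec G α x (c (l - 1)) →
      IntervalColoringAux.Spec G α x (c (l - 1) + 1) → IntervalColoringAux.Spec G α x m →
      m ≤ c l := fun l h1 h2 => (hstep l h1 h2).2.2.2.1
  have hdisjp : ∀ l, 1 ≤ l → l ≤ r →
      (∀ x, ¬(IntervalColoringAux.Spec G α x (c (l - 1)) ∧
        IntervalColoringAux.Spec G α x (c (l - 1) + 1))) ∨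
      (∀ m, c (l - 1) ≤ m → m ≤ c l → IntervalColoringAux.Spec G α (u l) m) :=
    fun l h1 h2 => (hstep l h1 h2).2.2.2.2
  -- choose the finsets P l
  have hPl0 : ∀ l, ∃ P : Finset V, 1 ≤ l → l ≤ r →
      P.card = c l - c (l - 1) + 1 ∧
      ∀ x ∈ P, ∃ m, IntervalColoringAux.Spec G α x m ∧ c (l - 1) + 1 ≤ m ∧ m ≤ c l := by
    intro l
    by_cases h : 1 ≤ l ∧ l ≤ r
    · obtain ⟨P, h1, h2⟩ := IntervalColoringAux.pset_aux hα (u l) (c (l - 1) + 1) (c l)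
        (by have := hlt l h.1 h.2; omega) (hblock l h.1 h.2)
      refine ⟨P, fun _ _ => ⟨?_, h2⟩⟩
      rw [h1]
      have := hlt l h.1 h.2
      omega
    · exact ⟨∅, fun h1 h2 => absurd ⟨h1, h2⟩ h⟩
  choose Pl hPl using hPl0
  -- no vertex can lie in two blocks that are two or more apart
  have hapart : ∀ (x : V) (a j : ℕ), 1 ≤ a → a + 2 ≤ j → j ≤ r →
      x ∈ Pl a → x ∈ Pl j → False := by
    intro x a j ha1 haj hjr hxa hxj
    obtain ⟨m, hm, hm1, hm2⟩ := (hPl a ha1 (by omega)).2 x hxa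
    obtain ⟨m', hm', hm1', hm2'⟩ := (hPl j (by omega) hjr).2 x hxj
    have hmono1 : c (a + 1) ≤ c (j - 1) := hmono _ _ (by omega)
    have hlt1 : c a < c (a + 1) := by
      have h := hlt (a + 1) (by omega) (by omega)
      have heq : a + 1 - 1 = a := by omega
      rwa [heq] at h
    have hsx1 : IntervalColoringAux.Spec G α x (c a) :=
      IntervalColoringAux.spec_between hα hm hm' (by omega) (by omega)
    have hsx2 : IntervalColoringAux.Spec G α x (c a + 1) :=
      IntervalColoringAux.spec_between hα hm hm' (by omega) (by omega)
    have hmx := hmaxp (a + 1) (by omega) (by omega) x m'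
    have heq : a + 1 - 1 = a := by omega
    rw [heq] at hmx
    have := hmx hsx1 hsx2 hm'
    omega
  -- every vertex lies in at most two of the Pl
  have htwo : ∀ x : V, ((Finset.Icc 1 r).filter (fun l => x ∈ Pl l)).card ≤ 2 := by
    intro x
    set T := (Finset.Icc 1 r).filter (fun l => x ∈ Pl l) with hT
    rcases T.eq_empty_or_nonempty with hTe | hTne
    · rw [hTe]; simp
    · have hminT := Finset.mem_filter.1 (T.min'_mem hTne)
      rw [Finset.mem_Icc] at hminT
      have hsub : T ⊆ Finset.Icc (T.min' hTne) (T.min' hTne + 1) := by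
        intro j hj
        have hjmem := Finset.mem_filter.1 hj
        rw [Finset.mem_Icc] at hjmem
        rw [Finset.mem_Icc]
        refine ⟨T.min'_le j hj, ?_⟩
        by_contra hcon
        exact hapart x (T.min' hTne) j hminT.1.1 (by omega) hjmem.1.2
          hminT.2 hjmem.2
      calc T.card ≤ (Finset.Icc (T.min' hTne) (T.min' hTne + 1)).card :=
            Finset.card_le_card hsub
        _ ≤ 2 := by rw [Nat.card_Icc]; omega
  -- double counting
  have hsum : ∑ l ∈ Finset.Icc 1 r, (Pl l).card ≤ 2 * n := by
    have h1 : ∀ l ∈ Finset.Icc 1 r,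
        (Pl l).card = ∑ x ∈ Finset.univ, if x ∈ Pl l then 1 else 0 := by
      intro l _
      conv_lhs => rw [← Finset.filter_univ_mem (Pl l)]
      rw [Finset.card_filter]
    rw [Finset.sum_congr rfl h1, Finset.sum_comm]
    have h2 : ∀ x : V, (∑ l ∈ Finset.Icc 1 r, if x ∈ Pl l then 1 else 0) ≤ 2 := by
      intro x
      rw [← Finset.card_filter]
      exact htwo x
    calc (∑ x ∈ Finset.univ, ∑ l ∈ Finset.Icc 1 r, if x ∈ Pl l then 1 else 0)
        ≤ ∑ _x ∈ (Finset.univ : Finset V), 2 :=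
          Finset.sum_le_sum fun x _ => h2 x
      _ = 2 * n := by
          rw [Finset.sum_const, Finset.card_univ, smul_eq_mul, mul_comm]
  -- telescoping
  have htel : ∀ k, ∑ l ∈ Finset.Icc 1 k, (c l - c (l - 1)) = c k - c 0 := by
    intro k
    induction k with
    | zero => simp
    | succ k ih =>
      rw [← Finset.insert_Icc_right_eq_Icc_add_one (by omega), Finset.sum_insert (by
        rw [Finset.mem_Icc]; omega)]
      rw [ih]
      have h1 : c k ≤ c (k + 1) := hmono _ _ (by omega)
      have h2 : c 0 ≤ c k := hmono _ _ (by omega)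
      have h3 : k + 1 - 1 = k := by omega
      rw [h3]
      omega
  have hcards : ∑ l ∈ Finset.Icc 1 r, (Pl l).card = t + r := by
    have h1 : ∀ l ∈ Finset.Icc 1 r, (Pl l).card = (c l - c (l - 1)) + 1 := by
      intro l hl
      rw [Finset.mem_Icc] at hl
      exact (hPl l hl.1 hl.2).1
    rw [Finset.sum_congr rfl h1, Finset.sum_add_distrib, htel r, hcr, hc0,
      Finset.sum_const, Nat.card_Icc]
    simp
  have hmain : t + r ≤ 2 * n := hcards ▸ hsum
  -- case analysis on r
  have hr3 : r = 1 ∨ r = 2 ∨ 3 ≤ r := by omega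
  rcases hr3 with hr | hr | hr
  · -- r = 1
    have h1 := (hPl 1 le_rfl (by omega)).1
    have h2 : (Pl 1).card ≤ n := by
      rw [hn]
      exact Finset.card_le_univ _
    have hc1 : c 1 = t := by rw [← hr]; exact hcr
    rw [h1] at h2
    simp only [Nat.sub_self] at *
    have hc00 : c (1 - 1) = 0 := hc0
    omega
  · -- r = 2
    have hcard1 := (hPl 1 le_rfl (by omega)).1
    have hcard2 := (hPl 2 (by omega) (by omega)).1
    have hP1n : (Pl 1).card ≤ n := by rw [hn]; exact Finset.card_le_univ _
    have hP2n : (Pl 2).card ≤ n := by rw [hn]; exact Finset.card_le_univ _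
    have hc2 : c 2 = t := by rw [← hr]; exact hcr
    have hlt1 : c 0 < c 1 := by
      have h := hlt 1 le_rfl (by omega); simpa using h
    have hlt2 : c 1 < c 2 := by
      have h := hlt 2 (by omega) (by omega); simpa using h
    rcases hdisjp 2 (by omega) (by omega) with hjump | hlink
    · -- jump case: Pl 1 and Pl 2 are disjoint
      have hdisj12 : Disjoint (Pl 1) (Pl 2) := by
        rw [Finset.disjoint_left]
        intro x hx1 hx2
        obtain ⟨m, hm, hm1, hm2⟩ := (hPl 1 le_rfl (by omega)).2 x hx1
        obtain ⟨m', hm', hm1', hm2'⟩ := (hPl 2 (by omega) (by omega)).2 x hx2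
        have h21 : (2 : ℕ) - 1 = 1 := rfl
        rw [h21] at hm1'
        refine hjump x ⟨?_, ?_⟩
        · rw [h21]
          exact IntervalColoringAux.spec_between hα hm hm' (by omega) (by omega)
        · rw [h21]
          exact IntervalColoringAux.spec_between hα hm hm' (by omega) (by omega)
      have hun : (Pl 1 ∪ Pl 2).card = (Pl 1).card + (Pl 2).card :=
        Finset.card_union_of_disjoint hdisj12
      have hunn : (Pl 1 ∪ Pl 2).card ≤ n := by rw [hn]; exact Finset.card_le_univ _
      have hc00 : c (1 - 1) = 0 := hc0
      have h21 : (2 : ℕ) - 1 = 1 := rfl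
      rw [h21] at hcard2
      omega
    · -- linked case
      have h21 : (2 : ℕ) - 1 = 1 := rfl
      rw [h21] at hlink
      obtain ⟨Q, hQcard, _⟩ := IntervalColoringAux.pset_aux hα (u 2) (c 1) (c 2)
        (le_of_lt hlt2) hlink
      have hQn : Q.card ≤ n := by rw [hn]; exact Finset.card_le_univ _
      rw [hQcard] at hQn
      have hc00 : c (1 - 1) = 0 := hc0
      omega
  · -- r ≥ 3
    omega
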